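/- Let ([−,−],[−,−,−]) be a quasi-Lie pair of brackets in an R-module M. Then the 3-bracket s : M³ → M defined by s(x,y,z) = 2[x,y,z] − [[x,y],z] − [[y,z],x] − [[z,x],y] is fully symmetric, i.e., invariant under all permutations of the three variables. -/
import Mathlib


/-- For a quasi-Lie pair of brackets `([-,-], [-,-,-])` in a module `M`, the
3-bracket `s(x,y,z) = 2[x,y,z] - [[x,y],z] - [[y,z],x] - [[z,x],y]` is fully
symmetric, i.e. invariant under all permutations of the three variables. -/
theorem quasiLie_symmetrization_fully_symmetric {R : Type*} [CommRing R]
    {M : Type*} [AddCommGroup M] [Module R M]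
    (b2 : M →ₗ[R] M →ₗ[R] M) (b3 : M →ₗ[R] M →ₗ[R] M →ₗ[R] M)
    (hskew : ∀ x y : M, b2 x y = - b2 y x)
    (hcyc : ∀ x y z : M, b3 x y z = b3 z x y)
    (hJ : ∀ x y z : M,
      b2 (b2 x y) z + b2 (b2 y z) x + b2 (b2 z x) y = b3 x y z - b3 y x z)
    (s : M → M → M → M)
    (hs : ∀ x y z : M, s x y z =
      (2 : R) • b3 x y z - b2 (b2 x y) z - b2 (b2 y z) x - b2 (b2 z x) y) :
    ∀ x y z : M,
      s x y z = s y x z ∧ s x y z = s x z y ∧ s x y z = s z y x ∧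
      s x y z = s z x y ∧ s x y z = s y z x := by
  have key : ∀ x y z : M, s x y z = b3 x y z + b3 y x z := by
    intro x y z
    have h := hJ x y z
    rw [hs x y z, two_smul, sub_sub, sub_sub, ← add_assoc, h]
    abel
  have swap : ∀ x y z : M, b3 y x z = b3 x z y := fun x y z => by
    rw [hcyc y x z, hcyc z y x]
  intro x y z
  refine ⟨?_, ?_, ?_, ?_, ?_⟩ <;> rw [key, key]
  · exact add_comm _ _
  · rw [← swap x y z, ← hcyc x y z, add_comm]
  · rw [← hcyc y x z, hcyc y z x, add_comm]
  · rw [← hcyc x y z, ← swap x y z]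
  · rw [hcyc y z x, ← hcyc y x z]
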